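/- Let X ⊆ ℝⁿ be a nonempty convex compact set with κ = max_{x∈X} ‖x‖₂ > 0 and C = cone({κ} × X) ⊆ ℝ^{n+1}. Let u ∈ C with u ≠ 0, and write u = β·(κ, x) with β > 0 and x ∈ X. Then for every f ∈ ℝⁿ and every ω > 0, π_C(u + ω·(⟨f, x⟩/κ, −f)) ≠ 0. Consequently, along the CBA⁺ iterates u_t = π_C(u_{t−1} + ω_t v_t) with decisions chosen by the CBA⁺ rule, if u_t ≠ 0 then u_{t'} ≠ 0 for all t' ≥ t. -/

import Mathlib

set_option autoImplicit false

open scoped RealInnerProductSpace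
open Finset

noncomputable section

/-- The lifted vector `(t, y) ∈ ℝ × ℝⁿ = ℝ^{n+1}`. -/
def pr {n : ℕ} (t : ℝ) (y : EuclideanSpace ℝ (Fin n)) :
    EuclideanSpace ℝ (Fin (n + 1)) :=
  WithLp.toLp 2 (Fin.cons t (fun i => y i) : Fin (n + 1) → ℝ)

/-- The conic hull `cone({κ} × X) = {α • (κ, x) : α ≥ 0, x ∈ X}`. -/
def coneLift {n : ℕ} (κ : ℝ) (X : Set (EuclideanSpace ℝ (Fin n))) :
    Set (EuclideanSpace ℝ (Fin (n + 1))) :=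
  {u | ∃ α : ℝ, 0 ≤ α ∧ ∃ x ∈ X, u = α • pr κ x}

/-- `p` is the Euclidean orthogonal projection of `u` onto the set `S`. -/
def IsProjOn {E : Type*} [NormedAddCommGroup E] [InnerProductSpace ℝ E]
    (u : E) (S : Set E) (p : E) : Prop :=
  p ∈ S ∧ ∀ z ∈ S, dist u p ≤ dist u z

lemma pr_inner {n : ℕ} (t s : ℝ) (y z : EuclideanSpace ℝ (Fin n)) :
    ⟪pr t y, pr s z⟫ = t * s + ⟪y, z⟫ := by
  simp [pr, PiLp.inner_apply, RCLike.inner_apply, Fin.sum_univ_succ, mul_comm]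

/-- Lemma 5(2): a nonzero CBA⁺ aggregate payoff `u = β • (κ, x)`
(`β > 0`, `x ∈ X`) stays nonzero after one CBA⁺ update; consequently, along the
CBA⁺ iterates `u_t = π_C(u_{t-1} + ω_t v_t)` with the CBA⁺ choice rule, if
`u_t ≠ 0` then `u_{t'} ≠ 0` for all `t' ≥ t`. -/
theorem stmt18 {n : ℕ} (X : Set (EuclideanSpace ℝ (Fin n)))
    (hXne : X.Nonempty) (hXcv : Convex ℝ X) (hXcp : IsCompact X)
    (κ : ℝ) (hκ : IsGreatest ((fun x => ‖x‖) '' X) κ) (hκpos : 0 < κ)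
    (ω : ℕ → ℝ) (hω : ∀ t ≥ 1, 0 < ω t)
    (f x : ℕ → EuclideanSpace ℝ (Fin n)) (hx : ∀ t ≥ 1, x t ∈ X)
    (u : ℕ → EuclideanSpace ℝ (Fin (n + 1)))
    (hu0 : u 0 = 0)
    -- CBA⁺ recursion: `u_t = π_C(u_{t-1} + ω_t • (⟨f_t, x_t⟩/κ, −f_t))`
    (hu : ∀ t ≥ 1, IsProjOn (u (t - 1) + ω t • pr (⟪f t, x t⟫ / κ) (-(f t)))
      (coneLift κ X) (u t))
    -- CBA⁺ choice rule: `x_{t+1}` is read off from `u_t` whenever `u_t ≠ 0`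
    (hchoice : ∀ t, u t ≠ 0 → ∃ β : ℝ, 0 < β ∧ u t = β • pr κ (x (t + 1))) :
    -- one-step claim: the projected update of a nonzero `u = β • (κ, x) ∈ C` is nonzero
    (∀ β : ℝ, 0 < β → ∀ x' ∈ X, ∀ f' : EuclideanSpace ℝ (Fin n), ∀ ω' : ℝ, 0 < ω' →
      ∀ w : EuclideanSpace ℝ (Fin (n + 1)),
        IsProjOn (β • pr κ x' + ω' • pr (⟪f', x'⟫ / κ) (-f')) (coneLift κ X) w →
        w ≠ 0) ∧
    -- consequence along the iterates
    (∀ t t' : ℕ, t ≤ t' → u t ≠ 0 → u t' ≠ 0) := by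
  have key : ∀ β : ℝ, 0 < β → ∀ x' ∈ X, ∀ f' : EuclideanSpace ℝ (Fin n), ∀ ω' : ℝ, 0 < ω' →
      ∀ w : EuclideanSpace ℝ (Fin (n + 1)),
        IsProjOn (β • pr κ x' + ω' • pr (⟪f', x'⟫ / κ) (-f')) (coneLift κ X) w →
        w ≠ 0 := by
    intro β hβ x' hx' f' ω' hω' w hw hw0
    set a : EuclideanSpace ℝ (Fin (n + 1)) := β • pr κ x' with ha
    set y : EuclideanSpace ℝ (Fin (n + 1)) := a + ω' • pr (⟪f', x'⟫ / κ) (-f') with hy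
    have haC : a ∈ coneLift κ X := ⟨β, hβ.le, x', hx', rfl⟩
    have hle : dist y w ≤ dist y a := hw.2 a haC
    rw [hw0] at hle
    have hinner : ⟪y, a⟫ = ‖a‖ ^ 2 := by
      have horth : ⟪pr (⟪f', x'⟫ / κ) (-f'), pr κ x'⟫ = 0 := by
        rw [pr_inner, inner_neg_left, div_mul_cancel₀ _ hκpos.ne']
        ring
      have h1 : ⟪ω' • pr (⟪f', x'⟫ / κ) (-f'), a⟫ = 0 := by
        rw [ha, real_inner_smul_left, real_inner_smul_right, horth]
        ring
      rw [hy, inner_add_left, h1, real_inner_self_eq_norm_sq]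
      ring
    have hane : a ≠ 0 := by
      intro h
      have h0 : a 0 = (0 : EuclideanSpace ℝ (Fin (n + 1))) 0 := by rw [h]
      have : β * κ = 0 := by simpa [ha, pr] using h0
      nlinarith
    have hapos : 0 < ‖a‖ ^ 2 := pow_pos (norm_pos_iff.mpr hane) 2
    have hd0 : dist y 0 = ‖y‖ := by simp
    have hda : dist y a = ‖y - a‖ := dist_eq_norm _ _
    have hsq : ‖y‖ ^ 2 ≤ ‖y - a‖ ^ 2 := by
      rw [hd0, hda] at hle
      exact pow_le_pow_left₀ (norm_nonneg _) hle 2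
    have hexp : ‖y - a‖ ^ 2 = ‖y‖ ^ 2 - 2 * ⟪y, a⟫ + ‖a‖ ^ 2 := norm_sub_sq_real y a
    rw [hexp, hinner] at hsq
    linarith
  refine ⟨key, ?_⟩
  intro t t' hle hut
  induction t', hle using Nat.le_induction with
  | base => exact hut
  | succ s hs ih =>
    obtain ⟨β, hβ, hrep⟩ := hchoice s ih
    have hproj := hu (s + 1) (by omega)
    simp only [Nat.add_sub_cancel] at hproj
    rw [hrep] at hproj
    exact key β hβ (x (s + 1)) (hx (s + 1) (by omega)) (f (s + 1)) (ω (s + 1))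
      (hω (s + 1) (by omega)) (u (s + 1)) hproj

end
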